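/- Wirtinger inequality: for a real 2-form η on an inner product space of dimension 2n with comass ‖η‖* ≤ 1, the n-fold wedge power satisfies ‖ηⁿ‖* ≤ n!, i.e., the comass of ηⁿ is at most n! times the n-th power of the comass of η. -/

import Mathlib

open scoped TensorProduct

variable {E : Type*} [NormedAddCommGroup E] [InnerProductSpace ℝ E]

set_option linter.unusedSectionVars false
set_option maxHeartbeats 1000000

open scoped RealInnerProductSpace


lemma vec2_eta (g : Fin 2 → E) : ![g 0, g 1] = g := by
  funext i; fin_cases i <;> simp

lemma upd0 (z y w : E) : Function.update ![z, y] 0 w = ![w, y] := by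
  funext i; fin_cases i <;> simp [Function.update]

lemma upd1 (x z w : E) : Function.update ![x, z] 1 w = ![x, w] := by
  funext i; fin_cases i <;> simp [Function.update]

/-- The 2-form as a bilinear map. -/
noncomputable def bil (η : E [⋀^Fin 2]→ₗ[ℝ] ℝ) : E →ₗ[ℝ] E →ₗ[ℝ] ℝ :=
  LinearMap.mk₂ ℝ (fun x y => η ![x, y])
    (fun x x' y => by
      show η ![x + x', y] = η ![x, y] + η ![x', y]
      rw [← upd0 x y (x + x'), ← upd0 x y x, ← upd0 x y x', AlternatingMap.map_update_add]
      simp [Function.update_idem])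
    (fun c x y => by
      show η ![c • x, y] = c • η ![x, y]
      rw [← upd0 x y (c • x), ← upd0 x y x, AlternatingMap.map_update_smul]
      simp [Function.update_idem])
    (fun x y y' => by
      show η ![x, y + y'] = η ![x, y] + η ![x, y']
      rw [← upd1 x y (y + y'), ← upd1 x y y, ← upd1 x y y', AlternatingMap.map_update_add]
      simp [Function.update_idem])
    (fun c x y => by
      show η ![x, c • y] = c • η ![x, y]
      rw [← upd1 x y (c • y), ← upd1 x y y, AlternatingMap.map_update_smul]
      simp [Function.update_idem])

@[simp] lemma bil_apply (η : E [⋀^Fin 2]→ₗ[ℝ] ℝ) (x y : E) : bil η x y = η ![x, y] := rfl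

lemma bil_self (η : E [⋀^Fin 2]→ₗ[ℝ] ℝ) (x : E) : η ![x, x] = 0 :=
  η.map_eq_zero_of_eq ![x, x] (i := 0) (j := 1) (by simp) (by decide)

lemma bil_skew (η : E [⋀^Fin 2]→ₗ[ℝ] ℝ) (x y : E) : η ![y, x] = -η ![x, y] := by
  have h := AlternatingMap.map_swap η ![x, y] (i := (0 : Fin 2)) (j := 1) (by decide)
  rw [← h]; congr 1; funext i; fin_cases i <;> simp [Equiv.swap_apply_def]

lemma orthonormal_pair {x y : E} (hx : ‖x‖ = 1) (hy : ‖y‖ = 1) (hxy : ⟪x, y⟫ = 0) :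
    Orthonormal ℝ ![x, y] := by
  constructor
  · intro i; fin_cases i <;> simp [hx, hy]
  · intro i j hij
    fin_cases i <;> fin_cases j <;> simp_all [real_inner_comm x y]

lemma bound_exists [FiniteDimensional ℝ E] (η : E [⋀^Fin 2]→ₗ[ℝ] ℝ) :
    ∃ C : ℝ, ∀ x y : E, ‖x‖ ≤ 1 → ‖y‖ ≤ 1 → |η ![x, y]| ≤ C := by
  set b := stdOrthonormalBasis ℝ E with hb
  refine ⟨∑ i, ∑ j, |η ![b i, b j]|, fun x y hx hy => ?_⟩
  obtain ⟨c, hc⟩ : ∃ c : Fin (Module.finrank ℝ E) → ℝ,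
      (x = ∑ i, c i • b i) ∧ ∀ i, |c i| ≤ 1 := by
    refine ⟨fun i => b.repr x i, (b.sum_repr x).symm, fun i => ?_⟩
    show |b.repr x i| ≤ 1
    rw [b.repr_apply_apply]
    calc |⟪b i, x⟫| ≤ ‖b i‖ * ‖x‖ := abs_real_inner_le_norm _ _
    _ ≤ 1 := by rw [b.orthonormal.1 i]; simpa using hx
  obtain ⟨d, hd⟩ : ∃ d : Fin (Module.finrank ℝ E) → ℝ,
      (y = ∑ i, d i • b i) ∧ ∀ i, |d i| ≤ 1 := by
    refine ⟨fun i => b.repr y i, (b.sum_repr y).symm, fun i => ?_⟩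
    show |b.repr y i| ≤ 1
    rw [b.repr_apply_apply]
    calc |⟪b i, y⟫| ≤ ‖b i‖ * ‖y‖ := abs_real_inner_le_norm _ _
    _ ≤ 1 := by rw [b.orthonormal.1 i]; simpa using hy
  have key : η ![x, y] = ∑ i, ∑ j, c i * (d j * η ![b i, b j]) := by
    have : bil η x y = ∑ i, ∑ j, c i * (d j * bil η (b i) (b j)) := by
      rw [hc.1, hd.1]
      simp only [map_sum, LinearMap.sum_apply, map_smul, LinearMap.smul_apply, smul_eq_mul,
        Finset.mul_sum, bil_apply]
      rw [Finset.sum_comm]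
      exact Finset.sum_congr rfl fun i _ => Finset.sum_congr rfl fun j _ => by ring
    simpa using this
  rw [key]
  refine (Finset.abs_sum_le_sum_abs _ _).trans ?_
  refine Finset.sum_le_sum fun i _ => ?_
  refine (Finset.abs_sum_le_sum_abs _ _).trans ?_
  refine Finset.sum_le_sum fun j _ => ?_
  rw [abs_mul, abs_mul]
  have h1 := hc.2 i
  have h2 := hd.2 j
  have h3 := abs_nonneg (η ![b i, b j])
  have h4 := abs_nonneg (c i)
  have h5 := abs_nonneg (d j)
  nlinarith [mul_le_mul_of_nonneg_right (mul_le_mul h1 h2 h5 zero_le_one) h3,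
    mul_assoc |c i| |d j| |η ![b i, b j]|]

noncomputable def Jmap [FiniteDimensional ℝ E] (η : E [⋀^Fin 2]→ₗ[ℝ] ℝ) : E →ₗ[ℝ] E where
  toFun x := (InnerProductSpace.toDual ℝ E).symm
    (LinearMap.toContinuousLinearMap (bil η x))
  map_add' x y := by
    show (InnerProductSpace.toDual ℝ E).symm (LinearMap.toContinuousLinearMap (bil η (x + y))) = _
    rw [map_add, map_add, map_add]
  map_smul' c x := by
    show (InnerProductSpace.toDual ℝ E).symm (LinearMap.toContinuousLinearMap (bil η (c • x))) = _
    rw [map_smul, map_smul, LinearIsometryEquiv.map_smulₛₗ]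
    rfl

lemma Jmap_inner [FiniteDimensional ℝ E] (η : E [⋀^Fin 2]→ₗ[ℝ] ℝ) (x y : E) :
    ⟪Jmap η x, y⟫ = η ![x, y] := by
  have : ⟪(InnerProductSpace.toDual ℝ E).symm (LinearMap.toContinuousLinearMap (bil η x)), y⟫ =
      (LinearMap.toContinuousLinearMap (bil η x)) y :=
    InnerProductSpace.toDual_symm_apply
  simpa [Jmap] using this

lemma Tsymm [FiniteDimensional ℝ E] (η : E [⋀^Fin 2]→ₗ[ℝ] ℝ) :
    ((Jmap η) ∘ₗ (Jmap η)).IsSymmetric := by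
  intro x y
  have h1 : ⟪Jmap η (Jmap η x), y⟫ = -⟪Jmap η y, Jmap η x⟫ := by
    rw [Jmap_inner, Jmap_inner, bil_skew]
  have h2 : ⟪x, Jmap η (Jmap η y)⟫ = -⟪Jmap η x, Jmap η y⟫ := by
    rw [real_inner_comm, Jmap_inner, Jmap_inner, bil_skew]
  simp only [LinearMap.comp_apply]
  rw [h1, h2, real_inner_comm]

lemma inner_JJ [FiniteDimensional ℝ E] (η : E [⋀^Fin 2]→ₗ[ℝ] ℝ) (x : E) :
    ⟪Jmap η (Jmap η x), x⟫ = -‖Jmap η x‖ ^ 2 := by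
  rw [Jmap_inner, bil_skew, ← Jmap_inner η x (Jmap η x), real_inner_self_eq_norm_sq]

universe u

lemma exists_adapted : ∀ (n : ℕ) (E : Type u) [NormedAddCommGroup E]
    [InnerProductSpace ℝ E] [FiniteDimensional ℝ E], Module.finrank ℝ E = 2 * n →
    ∀ η : E [⋀^Fin 2]→ₗ[ℝ] ℝ, ∃ e : Fin (2 * n) → E, Orthonormal ℝ e ∧
      ∀ i j : Fin (2 * n), (i : ℕ) / 2 ≠ (j : ℕ) / 2 → η ![e i, e j] = 0
  | 0, E, _, _, _ => by
    intro hE η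
    exact ⟨Fin.elim0, ⟨fun i => i.elim0, fun i => i.elim0⟩, fun i => i.elim0⟩
  | (n+1), E, _, _, _ => by
    intro hE η
    classical
    have hT := Tsymm η
    set b := hT.eigenvectorBasis hE with hbdef
    set μ := hT.eigenvalues hE with hμdef
    have hTb : ∀ i, (Jmap η) ((Jmap η) (b i)) = (μ i : ℝ) • b i := fun i =>
      hT.apply_eigenvectorBasis hE i
    have hnormJ : ∀ i, ‖Jmap η (b i)‖ ^ 2 = -(μ i) := by
      intro i
      have h1 : ⟪Jmap η (Jmap η (b i)), b i⟫ = μ i := by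
        rw [hTb i, real_inner_smul_left, real_inner_self_eq_norm_sq, b.orthonormal.1 i]
        norm_num
      have h2 := inner_JJ η (b i)
      rw [h1] at h2
      linarith
    by_cases hall : ∀ i, μ i = 0
    · -- η vanishes identically
      have hbz : ∀ i, Jmap η (b i) = 0 := by
        intro i
        have h := hnormJ i
        rw [hall i] at h
        have hn : ‖Jmap η (b i)‖ = 0 := by nlinarith [norm_nonneg (Jmap η (b i))]
        simpa using hn
      have hJ00 : Jmap η = 0 := b.toBasis.ext fun i => by
        rw [OrthonormalBasis.coe_toBasis, hbz i]; rfl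
      have hη0 : ∀ x y : E, η ![x, y] = 0 := by
        intro x y
        rw [← Jmap_inner, hJ00]
        simp
      exact ⟨b, b.orthonormal, fun i j _ => hη0 _ _⟩
    · push_neg at hall
      obtain ⟨i0, hi0⟩ := hall
      set e1 := b i0 with he1
      have hμneg : ‖Jmap η e1‖ ^ 2 = -(μ i0) := hnormJ i0
      have hJe1ne : Jmap η e1 ≠ 0 := by
        intro hc
        rw [hc] at hμneg
        simp at hμneg
        exact hi0 (by linarith)
      set r := ‖Jmap η e1‖ with hr
      have hrpos : 0 < r := norm_pos_iff.mpr hJe1ne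
      set f1 := r⁻¹ • Jmap η e1 with hf1
      have hnf1 : ‖f1‖ = 1 := by
        rw [hf1, norm_smul, norm_inv, Real.norm_eq_abs, abs_of_pos hrpos, ← hr]
        field_simp
      have hne1 : ‖e1‖ = 1 := b.orthonormal.1 i0
      have hef : ⟪e1, f1⟫ = 0 := by
        rw [hf1, real_inner_smul_right, real_inner_comm, Jmap_inner, bil_self, mul_zero]
      have hJf1 : Jmap η f1 = (r⁻¹ * μ i0) • e1 := by
        rw [hf1, map_smul, hTb i0, smul_smul]
      have hJe1 : Jmap η e1 = r • f1 := by
        rw [hf1, smul_smul, mul_inv_cancel₀ (ne_of_gt hrpos), one_smul]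
      set W : Submodule ℝ E := Submodule.span ℝ {e1, f1} with hW
      have he1W : e1 ∈ W := Submodule.subset_span (by simp)
      have hf1W : f1 ∈ W := Submodule.subset_span (by simp)
      have honp : Orthonormal ℝ ![e1, f1] := orthonormal_pair hne1 hnf1 hef
      have hfrW : Module.finrank ℝ W = 2 := by
        have hli := honp.linearIndependent
        have h2 := finrank_span_eq_card hli
        have hrange : Set.range ![e1, f1] = {e1, f1} := by
          ext z
          simp [Matrix.range_cons, Matrix.range_empty]
          tauto
        rw [hrange] at h2
        exact h2.trans (by simp)
      have hfrK : Module.finrank ℝ ↥(Wᗮ) = 2 * n := by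
        have h3 := Submodule.finrank_add_finrank_orthogonal W
        rw [hfrW, hE] at h3
        omega
      have horth1 : ∀ x : ↥(Wᗮ), ⟪e1, (x : E)⟫ = 0 := fun x => x.2 e1 he1W
      have horth2 : ∀ x : ↥(Wᗮ), ⟪f1, (x : E)⟫ = 0 := fun x => x.2 f1 hf1W
      have hηe1 : ∀ x : ↥(Wᗮ), η ![e1, (x : E)] = 0 := by
        intro x
        rw [← Jmap_inner, hJe1, real_inner_smul_left, horth2 x, mul_zero]
      have hηf1 : ∀ x : ↥(Wᗮ), η ![f1, (x : E)] = 0 := by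
        intro x
        rw [← Jmap_inner, hJf1, real_inner_smul_left, horth1 x, mul_zero]
      obtain ⟨e', he'on, he'blk⟩ := exists_adapted n ↥(Wᗮ) hfrK
        (η.compLinearMap (Wᗮ.subtype))
      set ee : Fin (2 * (n + 1)) → E := fun i =>
        if h0 : (i : ℕ) = 0 then e1 else if h1 : (i : ℕ) = 1 then f1
        else (e' ⟨(i : ℕ) - 2, by have := i.isLt; omega⟩ : E) with hee
      have hee0 : ∀ (i : Fin (2 * (n + 1))), (i : ℕ) = 0 → ee i = e1 := by
        intro i h; simp only [hee]; rw [dif_pos h]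
      have hee1 : ∀ (i : Fin (2 * (n + 1))), (i : ℕ) = 1 → ee i = f1 := by
        intro i h; simp only [hee]; rw [dif_neg (by omega), dif_pos h]
      have hee2 : ∀ (i : Fin (2 * (n + 1))) (h : 2 ≤ (i : ℕ)), ee i =
          (e' ⟨(i : ℕ) - 2, by have := i.isLt; omega⟩ : E) := by
        intro i h
        simp only [hee]
        rw [dif_neg (show ¬ (i : ℕ) = 0 by omega), dif_neg (show ¬ (i : ℕ) = 1 by omega)]
      have hcomp : ∀ (x y : ↥(Wᗮ)), η ![(x : E), (y : E)] =
          (η.compLinearMap (Wᗮ.subtype)) ![x, y] := by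
        intro x y
        rw [AlternatingMap.compLinearMap_apply]
        congr 1
        funext i
        fin_cases i <;> simp
      have he'ite := orthonormal_iff_ite.mp he'on
      refine ⟨ee, ?_, ?_⟩
      · rw [orthonormal_iff_ite]
        intro i j
        rcases Nat.lt_or_ge (i : ℕ) 2 with hi2 | hi2 <;>
          rcases Nat.lt_or_ge (j : ℕ) 2 with hj2 | hj2
        · by_cases hij : i = j
          · subst hij
            rw [if_pos rfl]
            by_cases h0 : (i : ℕ) = 0
            · rw [hee0 i h0, real_inner_self_eq_norm_sq, hne1]; norm_num
            · rw [hee1 i (by omega), real_inner_self_eq_norm_sq, hnf1]; norm_num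
          · rw [if_neg hij]
            have hvne : (i : ℕ) ≠ (j : ℕ) := fun hc => hij (Fin.ext hc)
            by_cases h0 : (i : ℕ) = 0
            · rw [hee0 i h0, hee1 j (by omega)]; exact hef
            · rw [hee1 i (by omega), hee0 j (by omega), real_inner_comm]; exact hef
        · rw [if_neg (fun hc : i = j => by subst hc; omega)]
          rw [hee2 j hj2]
          by_cases h0 : (i : ℕ) = 0
          · rw [hee0 i h0]; exact horth1 _
          · rw [hee1 i (by omega)]; exact horth2 _
        · rw [if_neg (fun hc : i = j => by subst hc; omega)]
          rw [hee2 i hi2, real_inner_comm]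
          by_cases h0 : (j : ℕ) = 0
          · rw [hee0 j h0]; exact horth1 _
          · rw [hee1 j (by omega)]; exact horth2 _
        · rw [hee2 i hi2, hee2 j hj2, ← Submodule.coe_inner, he'ite]
          by_cases hij : i = j
          · subst hij
            rw [if_pos rfl, if_pos rfl]
          · have hvne : (i : ℕ) ≠ (j : ℕ) := fun hc => hij (Fin.ext hc)
            rw [if_neg hij, if_neg (fun hc => by
              have := congrArg Fin.val hc
              simp only at this
              exact hvne (by omega))]
      · intro i j hij
        rcases Nat.lt_or_ge (i : ℕ) 2 with hi2 | hi2 <;>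
          rcases Nat.lt_or_ge (j : ℕ) 2 with hj2 | hj2
        · omega
        · by_cases h0 : (i : ℕ) = 0
          · rw [hee0 i h0, hee2 j hj2]; exact hηe1 _
          · rw [hee1 i (by omega), hee2 j hj2]; exact hηf1 _
        · rw [bil_skew]
          by_cases h0 : (j : ℕ) = 0
          · rw [hee0 j h0, hee2 i hi2, hηe1 _, neg_zero]
          · rw [hee1 j (by omega), hee2 i hi2, hηf1 _, neg_zero]
        · rw [hee2 i hi2, hee2 j hj2, hcomp]
          exact he'blk _ _ (by simp only; omega)

/-- The wedge product of real-valued alternating forms (the usual de Rham wedge, via the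
shuffle sum `domCoprod`). -/
noncomputable def wedgeForm {a b : ℕ} (ω : E [⋀^Fin a]→ₗ[ℝ] ℝ) (η : E [⋀^Fin b]→ₗ[ℝ] ℝ) :
    E [⋀^Fin (a + b)]→ₗ[ℝ] ℝ :=
  AlternatingMap.domDomCongr finSumFinEquiv
    ((TensorProduct.lid ℝ ℝ).toLinearMap.compAlternatingMap (ω.domCoprod η))

set_option synthInstance.maxHeartbeats 1000000 in
lemma wedge_eval {p q : ℕ} (ω : E [⋀^Fin p]→ₗ[ℝ] ℝ) (τ : E [⋀^Fin q]→ₗ[ℝ] ℝ)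
    (v : Fin (p + q) → E) :
    (p.factorial * q.factorial : ℝ) * wedgeForm ω τ v =
      ∑ σ : Equiv.Perm (Fin p ⊕ Fin q), ((Equiv.Perm.sign σ : ℤ) : ℝ) *
        ((ω fun i => v (finSumFinEquiv (σ (Sum.inl i)))) *
         (τ fun i => v (finSumFinEquiv (σ (Sum.inr i))))) := by
  have h := congrArg
    (fun F : E [⋀^(Fin p ⊕ Fin q)]→ₗ[ℝ] (ℝ ⊗[ℝ] ℝ) => F (fun i => v (finSumFinEquiv i)))
    (MultilinearMap.domCoprod_alternization_eq ω τ)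
  simp only [AlternatingMap.smul_apply, Fintype.card_fin] at h
  have hw : wedgeForm ω τ v = (TensorProduct.lid ℝ ℝ)
      ((ω.domCoprod τ) (fun i => v (finSumFinEquiv i))) := rfl
  rw [hw, show (p.factorial * q.factorial : ℝ) = ((p.factorial * q.factorial : ℕ) : ℝ) by
    push_cast; ring]
  rw [← nsmul_eq_mul, ← map_nsmul, ← h]
  rw [MultilinearMap.alternatization_apply, map_sum]
  refine Finset.sum_congr rfl fun σ _ => ?_
  rw [MultilinearMap.domDomCongr_apply, MultilinearMap.domCoprod_apply, Units.smul_def,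
    map_zsmul, TensorProduct.lid_tmul, smul_eq_mul, zsmul_eq_mul]
  norm_num

/-- The `n`-fold wedge power `η ∧ ⋯ ∧ η` of a 2-form `η`. -/
noncomputable def wedgePow (η : E [⋀^Fin 2]→ₗ[ℝ] ℝ) : (n : ℕ) → E [⋀^Fin (2 * n)]→ₗ[ℝ] ℝ
  | 0 => AlternatingMap.domDomCongr (finCongr (by omega))
      (AlternatingMap.constOfIsEmpty ℝ E (Fin 0) 1)
  | n + 1 => AlternatingMap.domDomCongr (finCongr (by ring))
      (wedgeForm η (wedgePow η n))

/-- block-adapted family for `η`. -/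
def Adapted (η : E [⋀^Fin 2]→ₗ[ℝ] ℝ) {m : ℕ} (v : Fin m → E) : Prop :=
  ∀ i j : Fin m, |η ![v i, v j]| ≤ 1 ∧ ((i : ℕ) / 2 ≠ (j : ℕ) / 2 → η ![v i, v j] = 0)

/-- monotone embedding of `Fin (2*n)` into `Fin (2+2*n)` skipping `2k, 2k+1`. -/
def g0 (n k : ℕ) (i : Fin (2 * n)) : Fin (2 + 2 * n) :=
  ⟨if (i : ℕ) < 2 * k then i else i + 2, by split <;> omega⟩

lemma adapted_comp_g0 {n : ℕ} (η : E [⋀^Fin 2]→ₗ[ℝ] ℝ) (u : Fin (2 + 2 * n) → E)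
    (hu : Adapted η u) (k : ℕ) : Adapted η (u ∘ g0 n k) := by
  intro i j
  refine ⟨(hu (g0 n k i) (g0 n k j)).1, fun hij => (hu (g0 n k i) (g0 n k j)).2 ?_⟩
  simp only [g0]
  split <;> split <;> omega

lemma exists_perm_factor {n k : ℕ} (h : Fin (2 * n) → Fin (2 + 2 * n))
    (hinj : Function.Injective h)
    (havoid : ∀ i, (h i : ℕ) ≠ 2 * k ∧ (h i : ℕ) ≠ 2 * k + 1) (hk : k ≤ n) :
    ∃ π : Equiv.Perm (Fin (2 * n)), h = g0 n k ∘ π := by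
  have hπdef : ∀ i : Fin (2 * n), (if (h i : ℕ) < 2 * k then (h i : ℕ) else (h i : ℕ) - 2) < 2 * n := by
    intro i
    have := havoid i
    have := (h i).isLt
    split <;> omega
  set f : Fin (2 * n) → Fin (2 * n) := fun i => ⟨_, hπdef i⟩ with hf
  have hfi : Function.Injective f := by
    intro i j hfij
    apply hinj
    have h1 := havoid i
    have h2 := havoid j
    have h3 := congrArg Fin.val hfij
    simp only [hf] at h3
    apply Fin.ext
    revert h3; split <;> split <;> omega
  have hfb : Function.Bijective f := (Finite.injective_iff_bijective).mp hfi
  refine ⟨Equiv.ofBijective f hfb, ?_⟩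
  funext i
  simp only [Function.comp_apply, Equiv.ofBijective_apply]
  apply Fin.ext
  simp only [g0, hf]
  have := havoid i
  have := (h i).isLt
  split <;> (try split) <;> omega

open Finset in
lemma fiber_card {n : ℕ} (p : Fin (2 + 2 * n) × Fin (2 + 2 * n)) (hp : p.1 ≠ p.2) :
    (Finset.univ.filter (fun σ : Equiv.Perm (Fin 2 ⊕ Fin (2 * n)) =>
      (finSumFinEquiv (σ (Sum.inl 0)), finSumFinEquiv (σ (Sum.inl 1))) = p)).card ≤
      (2 * n).factorial := by
  classical
  rw [← Fintype.card_subtype]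
  have hcard : Fintype.card {z : Fin (2 + 2 * n) // z ≠ p.1 ∧ z ≠ p.2} = 2 * n := by
    rw [Fintype.card_subtype]
    have : Finset.univ.filter (fun z : Fin (2 + 2 * n) => z ≠ p.1 ∧ z ≠ p.2) =
        Finset.univ \ {p.1, p.2} := by
      ext z; simp [not_or]
    rw [this, Finset.card_sdiff_of_subset (Finset.subset_univ _), Finset.card_insert_of_notMem
      (by simpa using hp), Finset.card_singleton]
    simp
  obtain ⟨c⟩ : Nonempty ({z : Fin (2 + 2 * n) // z ≠ p.1 ∧ z ≠ p.2} ≃ Fin (2 * n)) :=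
    ⟨Fintype.equivFinOfCardEq hcard⟩
  have hne : ∀ (σ : Equiv.Perm (Fin 2 ⊕ Fin (2 * n)))
      (_ : (finSumFinEquiv (σ (Sum.inl 0)), finSumFinEquiv (σ (Sum.inl 1))) = p)
      (i : Fin (2 * n)),
      finSumFinEquiv (σ (Sum.inr i)) ≠ p.1 ∧ finSumFinEquiv (σ (Sum.inr i)) ≠ p.2 := by
    intro σ hσ i
    have h1 : finSumFinEquiv (σ (Sum.inl 0)) = p.1 := congrArg Prod.fst hσ
    have h2 : finSumFinEquiv (σ (Sum.inl 1)) = p.2 := congrArg Prod.snd hσ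
    constructor <;> intro hc
    · rw [← h1] at hc
      have := σ.injective (finSumFinEquiv.injective hc)
      simp at this
    · rw [← h2] at hc
      have := σ.injective (finSumFinEquiv.injective hc)
      simp at this
  set T := {σ : Equiv.Perm (Fin 2 ⊕ Fin (2 * n)) //
      (finSumFinEquiv (σ (Sum.inl 0)), finSumFinEquiv (σ (Sum.inl 1))) = p} with hT
  have hinj2 : ∀ s : T, Function.Bijective
      (fun i : Fin (2 * n) => c ⟨finSumFinEquiv (s.1 (Sum.inr i)), hne s.1 s.2 i⟩) := by
    intro s
    rw [← Finite.injective_iff_bijective]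
    intro i j hij
    have h0 := congrArg Subtype.val (c.injective hij)
    simp only at h0
    exact Sum.inr.inj (s.1.injective (finSumFinEquiv.injective h0))
  let F : T → Equiv.Perm (Fin (2 * n)) := fun s => Equiv.ofBijective _ (hinj2 s)
  have hF : Function.Injective F := by
    intro s t hst
    apply Subtype.ext
    apply Equiv.ext
    intro x
    rcases x with j | i
    · have h1s : finSumFinEquiv (s.1 (Sum.inl 0)) = p.1 := congrArg Prod.fst s.2
      have h1t : finSumFinEquiv (t.1 (Sum.inl 0)) = p.1 := congrArg Prod.fst t.2
      have h2s : finSumFinEquiv (s.1 (Sum.inl 1)) = p.2 := congrArg Prod.snd s.2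
      have h2t : finSumFinEquiv (t.1 (Sum.inl 1)) = p.2 := congrArg Prod.snd t.2
      fin_cases j
      · exact finSumFinEquiv.injective (h1s.trans h1t.symm)
      · exact finSumFinEquiv.injective (h2s.trans h2t.symm)
    · have := congrFun (congrArg (fun (e : Equiv.Perm (Fin (2 * n))) => (e : Fin (2 * n) → Fin (2 * n))) hst) i
      simp only [F, Equiv.ofBijective_apply] at this
      have := congrArg Subtype.val (c.injective this)
      simp only at this
      exact finSumFinEquiv.injective (Fin.ext (congrArg Fin.val this))
  calc Fintype.card T ≤ Fintype.card (Equiv.Perm (Fin (2 * n))) := Fintype.card_le_of_injective F hF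
  _ = (2 * n).factorial := by simp [Fintype.card_perm]

/-- the partner index within a block. -/
def partner {m : ℕ} (a : Fin (2 + 2 * m)) : Fin (2 + 2 * m) :=
  ⟨if (a : ℕ) % 2 = 0 then a + 1 else a - 1, by
    have := a.isLt; split <;> omega⟩

open Finset in
lemma cardB {n : ℕ} :
    (Finset.univ.filter (fun p : Fin (2 + 2 * n) × Fin (2 + 2 * n) =>
      (p.1 : ℕ) / 2 = (p.2 : ℕ) / 2 ∧ p.1 ≠ p.2)).card = 2 + 2 * n := by
  classical
  have himg : (Finset.univ.filter (fun p : Fin (2 + 2 * n) × Fin (2 + 2 * n) =>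
      (p.1 : ℕ) / 2 = (p.2 : ℕ) / 2 ∧ p.1 ≠ p.2)) =
      Finset.univ.image (fun a : Fin (2 + 2 * n) => (a, partner a)) := by
    ext ⟨a, b⟩
    simp only [Finset.mem_filter, Finset.mem_image, Finset.mem_univ, true_and, Prod.mk.injEq]
    constructor
    · rintro ⟨h1, h2⟩
      refine ⟨a, rfl, ?_⟩
      have hv : (a : ℕ) ≠ (b : ℕ) := fun hc => h2 (Fin.ext hc)
      apply Fin.ext
      have hb := b.isLt
      simp only [partner]
      split <;> omega
    · rintro ⟨x, rfl, rfl⟩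
      have hx := x.isLt
      constructor
      · simp only [partner]; split <;> omega
      · intro hc
        have := congrArg Fin.val hc
        simp only [partner] at this
        revert this; split <;> omega
  rw [himg, Finset.card_image_of_injective _ (fun a b hab => congrArg Prod.fst hab)]
  simp

open Finset in
lemma keybound [FiniteDimensional ℝ E] :
    ∀ (n : ℕ) (η : E [⋀^Fin 2]→ₗ[ℝ] ℝ) (v : Fin (2 * n) → E), Adapted η v →
      |wedgePow η n v| ≤ (n.factorial : ℝ)
  | 0 => by
    intro η v _
    have h : wedgePow η 0 v = 1 := by
      simp [wedgePow, AlternatingMap.domDomCongr_apply]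
    rw [h]; norm_num
  | (n+1) => by
    intro η v hv
    classical
    have h2n : (2 + 2 * n) = 2 * (n + 1) := by ring
    set u : Fin (2 + 2 * n) → E := fun i => v (finCongr h2n i) with hu
    have hua : Adapted η u := by
      intro i j
      have h := hv (finCongr h2n i) (finCongr h2n j)
      simpa [hu] using h
    have hw : wedgePow η (n+1) v = wedgeForm η (wedgePow η n) u := by
      show (AlternatingMap.domDomCongr (finCongr _) (wedgeForm η (wedgePow η n))) v = _
      rw [AlternatingMap.domDomCongr_apply]
      rfl
    have heval := wedge_eval (p := 2) (q := 2*n) η (wedgePow η n) u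
    set F : Equiv.Perm (Fin 2 ⊕ Fin (2*n)) → ℝ := fun σ =>
      ((Equiv.Perm.sign σ : ℤ) : ℝ) *
        ((η fun i => u (finSumFinEquiv (σ (Sum.inl i)))) *
         (wedgePow η n fun i => u (finSumFinEquiv (σ (Sum.inr i))))) with hF
    set pm : Equiv.Perm (Fin 2 ⊕ Fin (2*n)) → Fin (2+2*n) × Fin (2+2*n) := fun σ =>
      (finSumFinEquiv (σ (Sum.inl 0)), finSumFinEquiv (σ (Sum.inl 1))) with hpm
    set Q : Fin (2+2*n) × Fin (2+2*n) → Prop := fun p =>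
      (p.1 : ℕ) / 2 = (p.2 : ℕ) / 2 ∧ p.1 ≠ p.2 with hQdef
    have hterm : ∀ σ, |F σ| ≤ (if Q (pm σ) then (n.factorial : ℝ) else 0) := by
      intro σ
      set a := finSumFinEquiv (σ (Sum.inl 0)) with ha
      set b := finSumFinEquiv (σ (Sum.inl 1)) with hb
      have hab : a ≠ b := by
        intro hc
        have h := σ.injective (finSumFinEquiv.injective hc)
        simp at h
      have hη2 : (η fun i => u (finSumFinEquiv (σ (Sum.inl i)))) = η ![u a, u b] :=
        (congrArg η (vec2_eta fun i => u (finSumFinEquiv (σ (Sum.inl i))))).symm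
      by_cases hQ : (a : ℕ) / 2 = (b : ℕ) / 2
      · have hif : Q (pm σ) := ⟨hQ, hab⟩
        rw [if_pos hif]
        set k := (a : ℕ) / 2 with hk
        have hkn : k ≤ n := by
          have := a.isLt; omega
        have havoid : ∀ i : Fin (2*n), ((finSumFinEquiv (σ (Sum.inr i)) : ℕ) ≠ 2 * k ∧
            (finSumFinEquiv (σ (Sum.inr i)) : ℕ) ≠ 2 * k + 1) := by
          intro i
          have hne1 : finSumFinEquiv (σ (Sum.inr i)) ≠ a := by
            intro hc
            have h := σ.injective (finSumFinEquiv.injective hc)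
            simp at h
          have hne2 : finSumFinEquiv (σ (Sum.inr i)) ≠ b := by
            intro hc
            have h := σ.injective (finSumFinEquiv.injective hc)
            simp at h
          have hv1 : (finSumFinEquiv (σ (Sum.inr i)) : ℕ) ≠ (a : ℕ) :=
            fun hc => hne1 (Fin.ext hc)
          have hv2 : (finSumFinEquiv (σ (Sum.inr i)) : ℕ) ≠ (b : ℕ) :=
            fun hc => hne2 (Fin.ext hc)
          have hvab : (a : ℕ) ≠ (b : ℕ) := fun hc => hab (Fin.ext hc)
          have hba := b.isLt
          have haa := a.isLt
          omega
        have hinj : Function.Injective (fun i : Fin (2*n) => finSumFinEquiv (σ (Sum.inr i))) := by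
          intro i j hij
          exact Sum.inr.inj (σ.injective (finSumFinEquiv.injective hij))
        obtain ⟨π, hπ⟩ := exists_perm_factor _ hinj havoid hkn
        have hWp : (fun i => u (finSumFinEquiv (σ (Sum.inr i)))) = (u ∘ g0 n k) ∘ π := by
          funext i
          have := congrFun hπ i
          simp only [Function.comp_apply] at this ⊢
          rw [this]
        have hWbound : |wedgePow η n fun i => u (finSumFinEquiv (σ (Sum.inr i)))| ≤
            (n.factorial : ℝ) := by
          rw [hWp]
          have hmp := AlternatingMap.map_perm (wedgePow η n) (u ∘ g0 n k) π
          rw [hmp]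
          have hIH := keybound n η (u ∘ g0 n k) (adapted_comp_g0 η u hua k)
          rcases Int.units_eq_one_or (Equiv.Perm.sign π) with hs | hs <;>
            simp [hs, hIH]
        rw [hF]
        simp only
        rw [abs_mul, abs_mul, hη2]
        have hsign : |((Equiv.Perm.sign σ : ℤ) : ℝ)| = 1 := by
          rcases Int.units_eq_one_or (Equiv.Perm.sign σ) with hs | hs <;> simp [hs]
        rw [hsign, one_mul]
        have hηb : |η ![u a, u b]| ≤ 1 := (hua a b).1
        have hWnn := abs_nonneg (wedgePow η n fun i => u (finSumFinEquiv (σ (Sum.inr i))))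
        have hfn : (0:ℝ) ≤ (n.factorial : ℝ) := by positivity
        nlinarith
      · have hzero : η ![u a, u b] = 0 := (hua a b).2 hQ
        have hif : ¬ Q (pm σ) := by
          intro hc
          exact hQ hc.1
        rw [if_neg hif, hF]
        simp only
        rw [hη2, hzero]
        simp
    have hcardP : (Finset.univ.filter (fun σ => Q (pm σ))).card ≤ (2 + 2*n) * (2*n).factorial := by
      have hmem : ∀ σ ∈ Finset.univ.filter (fun σ => Q (pm σ)),
          pm σ ∈ Finset.univ.filter Q := by
        intro σ hσ
        simp only [Finset.mem_filter, Finset.mem_univ, true_and] at hσ ⊢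
        exact hσ
      rw [Finset.card_eq_sum_card_fiberwise hmem]
      calc ∑ p ∈ Finset.univ.filter Q,
            ((Finset.univ.filter (fun σ => Q (pm σ))).filter (fun σ => pm σ = p)).card
          ≤ ∑ p ∈ Finset.univ.filter Q, (2*n).factorial := by
            refine Finset.sum_le_sum fun p hp => ?_
            have hp' : p.1 ≠ p.2 := by
              simp only [Finset.mem_filter, hQdef] at hp
              exact hp.2.2
            refine le_trans (Finset.card_le_card ?_) (fiber_card p hp')
            intro σ hσ
            simp only [Finset.mem_filter, Finset.mem_univ, true_and] at hσ ⊢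
            exact hσ.2
      _ = (2 + 2*n) * (2*n).factorial := by
            rw [Finset.sum_const, cardB]; simp [mul_comm]
    have hsum : |∑ σ : Equiv.Perm (Fin 2 ⊕ Fin (2*n)), F σ| ≤
        ((2 + 2*n) * (2*n).factorial * n.factorial : ℝ) := by
      calc |∑ σ : Equiv.Perm (Fin 2 ⊕ Fin (2*n)), F σ|
          ≤ ∑ σ : Equiv.Perm (Fin 2 ⊕ Fin (2*n)), |F σ| := Finset.abs_sum_le_sum_abs _ _
      _ ≤ ∑ σ : Equiv.Perm (Fin 2 ⊕ Fin (2*n)), (if Q (pm σ) then (n.factorial : ℝ) else 0) :=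
            Finset.sum_le_sum fun σ _ => hterm σ
      _ = ((Finset.univ.filter (fun σ => Q (pm σ))).card : ℝ) * (n.factorial : ℝ) := by
            rw [Finset.sum_ite, Finset.sum_const, Finset.sum_const_zero, add_zero,
              nsmul_eq_mul]
      _ ≤ ((2 + 2*n) * (2*n).factorial : ℝ) * (n.factorial : ℝ) := by
            have hc := hcardP
            have : ((Finset.univ.filter (fun σ => Q (pm σ))).card : ℝ) ≤
                ((2 + 2*n) * (2*n).factorial : ℝ) := by
              exact_mod_cast hc
            exact mul_le_mul_of_nonneg_right this (by positivity)
      _ = ((2 + 2*n) * (2*n).factorial * n.factorial : ℝ) := by push_cast; ring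
    rw [hw]
    have hCpos : (0:ℝ) < ((2:ℕ).factorial * (2*n).factorial : ℝ) := by positivity
    have habs : ((2:ℕ).factorial * (2*n).factorial : ℝ) * |wedgeForm η (wedgePow η n) u| =
        |∑ σ : Equiv.Perm (Fin 2 ⊕ Fin (2*n)), F σ| := by
      rw [← heval, abs_mul, abs_of_pos hCpos]
    have hfinal : ((2:ℕ).factorial * (2*n).factorial : ℝ) * |wedgeForm η (wedgePow η n) u| ≤
        ((2:ℕ).factorial * (2*n).factorial : ℝ) * ((n+1).factorial : ℝ) := by
      rw [habs]
      refine hsum.trans (le_of_eq ?_)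
      rw [Nat.factorial_succ]
      push_cast
      simp [Nat.factorial]
      ring
    exact le_of_mul_le_mul_left hfinal hCpos

/-- The comass of a `k`-form: the supremum of its values on orthonormal `k`-tuples. -/
noncomputable def comass {k : ℕ} (ω : E [⋀^Fin k]→ₗ[ℝ] ℝ) : ℝ :=
  sSup {r : ℝ | ∃ v : Fin k → E, Orthonormal ℝ v ∧ r = ω v}

lemma comass_bddAbove [FiniteDimensional ℝ E] (η : E [⋀^Fin 2]→ₗ[ℝ] ℝ) :
    BddAbove {r : ℝ | ∃ v : Fin 2 → E, Orthonormal ℝ v ∧ r = η v} := by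
  obtain ⟨C, hC⟩ := bound_exists η
  refine ⟨C, ?_⟩
  rintro r ⟨v, hv, rfl⟩
  have h1 : η v = η ![v 0, v 1] := (congrArg η (vec2_eta v)).symm
  rw [h1]
  refine le_trans (le_abs_self _) (hC (v 0) (v 1) ?_ ?_)
  · rw [hv.1 0]
  · rw [hv.1 1]

lemma le_comass [FiniteDimensional ℝ E] (η : E [⋀^Fin 2]→ₗ[ℝ] ℝ) {x y : E}
    (h : Orthonormal ℝ ![x, y]) : η ![x, y] ≤ comass η :=
  le_csSup (comass_bddAbove η) ⟨![x, y], h, rfl⟩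

lemma abs_le_comass [FiniteDimensional ℝ E] (η : E [⋀^Fin 2]→ₗ[ℝ] ℝ) {x y : E}
    (h : Orthonormal ℝ ![x, y]) : |η ![x, y]| ≤ comass η := by
  have hx : ‖x‖ = 1 := by simpa using h.1 0
  have hy : ‖y‖ = 1 := by simpa using h.1 1
  have hxy : ⟪x, y⟫ = 0 := by simpa using h.2 (show (0 : Fin 2) ≠ 1 by decide)
  have h2 : Orthonormal ℝ ![y, x] :=
    orthonormal_pair hy hx (by rw [real_inner_comm]; exact hxy)
  rw [abs_le]
  constructor
  · have h3 := le_comass η h2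
    rw [bil_skew] at h3
    linarith
  · exact le_comass η h

/-- Wirtinger inequality: for a real 2-form `η` on an inner product space
of dimension `2n` with comass `‖η‖* ≤ 1`, the `n`-fold wedge power satisfies
`‖ηⁿ‖* ≤ n!`; i.e. the comass of `ηⁿ` is at most `n!` times the `n`-th power of the
comass of `η`. -/
theorem wirtinger_inequality (n : ℕ) [FiniteDimensional ℝ E]
    (hE : Module.finrank ℝ E = 2 * n)
    (η : E [⋀^Fin 2]→ₗ[ℝ] ℝ) (hη : comass η ≤ 1) :
    comass (wedgePow η n) ≤ (n.factorial : ℝ) := by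
  classical
  refine Real.sSup_le ?_ (by exact_mod_cast Nat.zero_le _)
  rintro r ⟨v, hvon, rfl⟩
  obtain ⟨e, heon, heblk⟩ := exists_adapted n E hE η
  have hadapt : Adapted η e := by
    intro i j
    constructor
    · by_cases hij : i = j
      · subst hij; rw [bil_self]; norm_num
      · have hp : Orthonormal ℝ ![e i, e j] :=
          orthonormal_pair (heon.1 i) (heon.1 j) (heon.2 hij)
        exact (abs_le_comass η hp).trans hη
    · exact heblk i j
  rcases Nat.eq_zero_or_pos n with hn | hn
  · subst hn
    have h : wedgePow η 0 v = 1 := by simp [wedgePow, AlternatingMap.domDomCongr_apply]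
    rw [h]; norm_num
  haveI : Nonempty (Fin (2 * n)) := ⟨⟨0, by omega⟩⟩
  have hcard : Fintype.card (Fin (2 * n)) = Module.finrank ℝ E := by simp [hE]
  set bv := basisOfLinearIndependentOfCardEqFinrank hvon.linearIndependent hcard with hbv
  set be := basisOfLinearIndependentOfCardEqFinrank heon.linearIndependent hcard with hbe
  have hbvc : ⇑bv = v := coe_basisOfLinearIndependentOfCardEqFinrank _ _
  have hbec : ⇑be = e := coe_basisOfLinearIndependentOfCardEqFinrank _ _
  have hsm := AlternatingMap.eq_smul_basis_det be (wedgePow η n)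
  have hval : wedgePow η n v = wedgePow η n e * be.det v := by
    conv_lhs => rw [← hbvc, hsm]
    rw [AlternatingMap.smul_apply, smul_eq_mul, hbec, hbvc]
  have hdet : be.det ⇑bv = 1 ∨ be.det ⇑bv = -1 := by
    have h5 := OrthonormalBasis.det_to_matrix_orthonormalBasis_real
      (be.toOrthonormalBasis (hbec ▸ heon)) (bv.toOrthonormalBasis (hbvc ▸ hvon))
    rwa [Module.Basis.toBasis_toOrthonormalBasis, Module.Basis.coe_toOrthonormalBasis] at h5
  have hkb := keybound n η e hadapt
  rw [hval]
  rw [hbvc] at hdet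
  rcases hdet with h1 | h1
  · rw [h1, mul_one]
    exact le_trans (le_abs_self _) hkb
  · rw [h1, mul_neg_one]
    exact (neg_le_abs _).trans hkb
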